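/- Let n ≥ 1 and let 0 < τ_1 ≤ τ_2 ≤ … ≤ τ_n be real numbers, and let S ≥ 1/4 be a real constant. Define j* as the smallest index m ∈ {1,…,n} such that either m = n or S·(∑_{i=1}^m 1/τ_i)^{-1} < τ_{m+1}, and set t_1 = S·(∑_{i=1}^{j*} 1/τ_i)^{-1} and t_2 = min_{j ∈ {1,…,n}} (∑_{i=1}^j 1/τ_i)^{-1}·(S + j). Then t_1 ≤ t_2 ≤ 6·t_1. -/

import Mathlib

open Finset

theorem stmt0 (n : ℕ) (hn : 1 ≤ n) (τ : ℕ → ℝ)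
    (hpos : ∀ i, 1 ≤ i → i ≤ n → 0 < τ i)
    (hmono : ∀ i j, 1 ≤ i → i ≤ j → j ≤ n → τ i ≤ τ j)
    (S : ℝ) (hS : 1/4 ≤ S)
    (jstar : ℕ) (hjmem : jstar ∈ Finset.Icc 1 n)
    (hjprop : jstar = n ∨ S * (∑ i ∈ Finset.Icc 1 jstar, 1/τ i)⁻¹ < τ (jstar + 1))
    (hjmin : ∀ m ∈ Finset.Icc 1 n, m < jstar →
      ¬(m = n ∨ S * (∑ i ∈ Finset.Icc 1 m, 1/τ i)⁻¹ < τ (m + 1)))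
    (t₁ t₂ : ℝ)
    (ht₁ : t₁ = S * (∑ i ∈ Finset.Icc 1 jstar, 1/τ i)⁻¹)
    (ht₂ : t₂ = (Finset.Icc 1 n).inf' (Finset.nonempty_Icc.mpr hn)
      (fun j => (∑ i ∈ Finset.Icc 1 j, 1/τ i)⁻¹ * (S + j))) :
    t₁ ≤ t₂ ∧ t₂ ≤ 6 * t₁ := by
  obtain ⟨hj1, hjn⟩ := Finset.mem_Icc.mp hjmem
  have hS0 : (0:ℝ) < S := lt_of_lt_of_le (by norm_num) hS
  set A : ℕ → ℝ := fun j => ∑ i ∈ Finset.Icc 1 j, 1/τ i with hA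
  have Apos : ∀ j, 1 ≤ j → j ≤ n → 0 < A j := by
    intro j h1 h2
    apply Finset.sum_pos
    · intro i hi
      obtain ⟨hi1, hi2⟩ := Finset.mem_Icc.mp hi
      have := hpos i hi1 (le_trans hi2 h2)
      positivity
    · exact Finset.nonempty_Icc.mpr h1
  have Amono : ∀ j k, 1 ≤ j → j ≤ k → k ≤ n → A j ≤ A k := by
    intro j k _ h2 h3
    apply Finset.sum_le_sum_of_subset_of_nonneg (Finset.Icc_subset_Icc le_rfl h2)
    intro i hi _
    obtain ⟨hi1, hi2⟩ := Finset.mem_Icc.mp hi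
    have := hpos i hi1 (le_trans hi2 h3)
    positivity
  have hApos := Apos jstar hj1 hjn
  -- (jstar : ℝ) ≤ S + 1
  have hjS : (jstar : ℝ) ≤ S + 1 := by
    rcases eq_or_lt_of_le hj1 with h | h
    · rw [← h]; push_cast; linarith
    · set m := jstar - 1 with hm
      have hm1 : 1 ≤ m := by omega
      have hmn : m ≤ n := by omega
      have hmm : m + 1 = jstar := by omega
      have hnot := hjmin m (Finset.mem_Icc.mpr ⟨hm1, hmn⟩) (by omega)
      push_neg at hnot
      obtain ⟨-, hle⟩ := hnot
      rw [hmm] at hle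
      have hAm := Apos m hm1 hmn
      have hτj : 0 < τ jstar := hpos jstar hj1 hjn
      have h1 : (m:ℝ) * (1/τ jstar) ≤ A m := by
        have hb : ∀ i ∈ Finset.Icc 1 m, 1/τ jstar ≤ 1/τ i := by
          intro i hi
          obtain ⟨hi1, hi2⟩ := Finset.mem_Icc.mp hi
          have hτi : 0 < τ i := hpos i hi1 (le_trans hi2 hmn)
          exact one_div_le_one_div_of_le hτi (hmono i jstar hi1 (by omega) hjn)
        calc (m:ℝ) * (1/τ jstar) = ∑ _i ∈ Finset.Icc 1 m, 1/τ jstar := by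
              rw [Finset.sum_const, Nat.card_Icc]
              simp [hm1]
          _ ≤ A m := Finset.sum_le_sum hb
      have h2 : τ jstar * A m ≤ S := by
        have := mul_le_mul_of_nonneg_right hle (le_of_lt hAm)
        rwa [mul_assoc, inv_mul_cancel₀ (ne_of_gt hAm), mul_one] at this
      have h3 : (m:ℝ) ≤ S := by
        have : (m:ℝ) ≤ τ jstar * A m := by
          calc (m:ℝ) = (m:ℝ) * (1/τ jstar) * τ jstar := by field_simp
            _ ≤ A m * τ jstar := mul_le_mul_of_nonneg_right h1 (le_of_lt hτj)
            _ = τ jstar * A m := mul_comm _ _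
        linarith
      have hcast : (jstar:ℝ) = (m:ℝ) + 1 := by
        rw [hm]; push_cast [Nat.cast_sub hj1]; ring
      linarith
  constructor
  · rw [ht₁, ht₂]
    apply Finset.le_inf'
    intro j hj
    obtain ⟨hj1', hjn'⟩ := Finset.mem_Icc.mp hj
    have hAj := Apos j hj1' hjn'
    rcases le_or_gt j jstar with hle | hlt
    · have hAA : A j ≤ A jstar := Amono j jstar hj1' hle hjn
      have h4 : (A jstar)⁻¹ ≤ (A j)⁻¹ := by
        exact inv_anti₀ hAj hAA
      have hj0 : (0:ℝ) ≤ (j:ℝ) := Nat.cast_nonneg j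
      calc S * (A jstar)⁻¹ ≤ S * (A j)⁻¹ := by nlinarith
        _ ≤ (A j)⁻¹ * (S + j) := by
            rw [mul_comm]
            have : (0:ℝ) < (A j)⁻¹ := by positivity
            nlinarith
    · have hjsn : jstar < n := lt_of_lt_of_le hlt hjn'
      have hlt2 : S * (A jstar)⁻¹ < τ (jstar + 1) := by
        rcases hjprop with h | h
        · omega
        · exact h
      have hT0 : (0:ℝ) < S * (A jstar)⁻¹ := by positivity
      have hsplit : A jstar + ∑ i ∈ Finset.Ioc jstar j, 1/τ i = A j := by
        rw [hA]
        simp only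
        rw [show Finset.Icc 1 jstar = Finset.Ioc 0 jstar from (Finset.Icc_add_one_left_eq_Ioc 0 jstar),
            show Finset.Icc 1 j = Finset.Ioc 0 j from (Finset.Icc_add_one_left_eq_Ioc 0 j)]
        exact Finset.sum_Ioc_consecutive _ (Nat.zero_le _) hlt.le
      have hbound : ∑ i ∈ Finset.Ioc jstar j, 1/τ i ≤ ((j:ℝ) - jstar) * (A jstar / S) := by
        have hb : ∀ i ∈ Finset.Ioc jstar j, 1/τ i ≤ A jstar / S := by
          intro i hi
          obtain ⟨hi1, hi2⟩ := Finset.mem_Ioc.mp hi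
          have hτi : S * (A jstar)⁻¹ < τ i :=
            lt_of_lt_of_le hlt2 (hmono (jstar+1) i (by omega) (by omega) (le_trans hi2 hjn'))
          have hτi0 : 0 < τ i := lt_trans hT0 hτi
          have := one_div_le_one_div_of_le hT0 hτi.le
          calc 1/τ i ≤ 1/(S * (A jstar)⁻¹) := this
            _ = A jstar / S := by field_simp
        calc ∑ i ∈ Finset.Ioc jstar j, 1/τ i ≤ ∑ _i ∈ Finset.Ioc jstar j, A jstar / S :=
              Finset.sum_le_sum hb
          _ = ((j:ℝ) - jstar) * (A jstar / S) := by
              rw [Finset.sum_const, Nat.card_Ioc]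
              rw [nsmul_eq_mul, Nat.cast_sub hlt.le]
      have hkey : S * A j ≤ (S + j) * A jstar := by
        have h5 : A j ≤ A jstar + ((j:ℝ) - jstar) * (A jstar / S) := by
          rw [← hsplit]; linarith
        have hjj : (jstar:ℝ) ≥ 0 := Nat.cast_nonneg _
        have : S * A j ≤ S * A jstar + ((j:ℝ) - jstar) * A jstar := by
          have := mul_le_mul_of_nonneg_left h5 hS0.le
          calc S * A j ≤ S * (A jstar + ((j:ℝ) - jstar) * (A jstar / S)) := this
            _ = S * A jstar + ((j:ℝ) - jstar) * A jstar := by field_simp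
        nlinarith
      rw [show S * (A jstar)⁻¹ = S / A jstar by ring,
          show (A j)⁻¹ * (S + j) = (S + j) / A j by ring]
      rw [div_le_div_iff₀ hApos hAj]
      linarith
  · rw [ht₁, ht₂]
    have hmem' : jstar ∈ Finset.Icc 1 n := hjmem
    calc (Finset.Icc 1 n).inf' (Finset.nonempty_Icc.mpr hn)
          (fun j => (∑ i ∈ Finset.Icc 1 j, 1/τ i)⁻¹ * (S + j))
        ≤ (A jstar)⁻¹ * (S + jstar) := Finset.inf'_le _ hmem'
      _ ≤ 6 * (S * (A jstar)⁻¹) := by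
          have hinv : (0:ℝ) < (A jstar)⁻¹ := by positivity
          nlinarith
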